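/- arXiv:2604.21423 — 2 statements merged into one kernel-verified Lean document; each statement's English description precedes it below -/
import Mathlib

section
/- Let F be the log-normal distribution on (0,∞) with density f(α) = (1/(α σ √(2π))) exp(−(log α − μ)²/(2σ²)) for parameters μ ∈ ℝ, σ > 0, and let L(x) = ∫₀^∞ e^{−αx} f(α) dα be its Laplace transform. Then for every constant c > 1, L(cx)/L(x) → 0 as x → ∞. -/
open MeasureTheory Real Filter

/-- Density of the log-normal distribution with parameters `μ` and `σ` on `(0, ∞)`. -/
noncomputable def lognormalPdf (μ σ : ℝ) (α : ℝ) : ℝ :=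
  (1 / (α * σ * Real.sqrt (2 * Real.pi))) * Real.exp (-(Real.log α - μ) ^ 2 / (2 * σ ^ 2))

/-- Laplace transform of the log-normal distribution. -/
noncomputable def lnLaplace (μ σ : ℝ) (x : ℝ) : ℝ :=
  ∫ α in Set.Ioi (0 : ℝ), Real.exp (-α * x) * lognormalPdf μ σ α

section Aux

lemma sqrt2pi_pos : 0 < Real.sqrt (2 * Real.pi) := Real.sqrt_pos.2 (by positivity)

lemma lognormalPdf_pos {μ σ : ℝ} (hσ : 0 < σ) {α : ℝ} (hα : 0 < α) :
    0 < lognormalPdf μ σ α := by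
  unfold lognormalPdf
  have h := sqrt2pi_pos
  positivity

lemma lognormalPdf_continuousOn {μ σ : ℝ} (hσ : 0 < σ) :
    ContinuousOn (lognormalPdf μ σ) (Set.Ioi 0) := by
  unfold lognormalPdf
  apply ContinuousOn.mul
  · apply ContinuousOn.div continuousOn_const
    · exact (continuousOn_id.mul continuousOn_const).mul continuousOn_const
    · intro x hx
      have hx' : (0:ℝ) < x := hx
      have := sqrt2pi_pos
      positivity
  · apply Real.continuous_exp.comp_continuousOn
    apply ContinuousOn.div_const
    apply ContinuousOn.neg
    apply ContinuousOn.pow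
    apply ContinuousOn.sub _ continuousOn_const
    exact Real.continuousOn_log.mono (fun x hx => ne_of_gt (by exact hx))

lemma lognormalPdf_eq {μ σ : ℝ} {α : ℝ} (hα : 0 < α) :
    lognormalPdf μ σ α =
      Real.exp (-(Real.log α - μ) ^ 2 / (2 * σ ^ 2) - Real.log α) /
        (σ * Real.sqrt (2 * Real.pi)) := by
  unfold lognormalPdf
  rw [Real.exp_sub, Real.exp_log hα]
  ring

lemma lognormalPdf_le_const {μ σ : ℝ} (hσ : 0 < σ) {α : ℝ} (hα : 0 < α) :
    lognormalPdf μ σ α ≤ Real.exp (σ ^ 2 / 2 - μ) / (σ * Real.sqrt (2 * Real.pi)) := by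
  rw [lognormalPdf_eq hα]
  have hs := sqrt2pi_pos
  gcongr Real.exp ?_ / _
  have h1 : -(Real.log α - μ) ^ 2 / (2 * σ ^ 2) ≤ σ ^ 2 / 2 - μ + Real.log α := by
    rw [div_le_iff₀ (by positivity)]
    nlinarith [sq_nonneg (Real.log α - μ + σ ^ 2)]
  linarith

lemma lognormalPdf_le_rpow {μ σ : ℝ} (hσ : 0 < σ) {α : ℝ} (hα : 0 < α) :
    lognormalPdf μ σ α ≤
      Real.exp (σ ^ 2 / 2 + μ) / (σ * Real.sqrt (2 * Real.pi)) * α ^ (-2 : ℝ) := by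
  have hs := sqrt2pi_pos
  rw [lognormalPdf_eq hα, Real.rpow_def_of_pos hα, div_mul_eq_mul_div, ← Real.exp_add]
  gcongr Real.exp ?_ / _
  have h1 : -(Real.log α - μ) ^ 2 / (2 * σ ^ 2) ≤ σ ^ 2 / 2 + μ + Real.log α * (-2) + Real.log α := by
    rw [div_le_iff₀ (by positivity)]
    nlinarith [sq_nonneg (Real.log α - μ - σ ^ 2)]
  linarith

lemma lognormalPdf_integrableOn {μ σ : ℝ} (hσ : 0 < σ) :
    IntegrableOn (lognormalPdf μ σ) (Set.Ioi 0) := by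
  have hcont := lognormalPdf_continuousOn (μ := μ) hσ
  rw [← Set.Ioc_union_Ioi_eq_Ioi (zero_le_one' ℝ)]
  apply IntegrableOn.union
  · apply Integrable.mono' (g := fun _ : ℝ =>
      Real.exp (σ ^ 2 / 2 - μ) / (σ * Real.sqrt (2 * Real.pi)))
      (integrableOn_const measure_Ioc_lt_top.ne)
    · exact (hcont.mono Set.Ioc_subset_Ioi_self).aestronglyMeasurable measurableSet_Ioc
    · filter_upwards [ae_restrict_mem measurableSet_Ioc] with α hα
      rw [Real.norm_eq_abs, abs_of_pos (lognormalPdf_pos hσ hα.1)]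
      exact lognormalPdf_le_const hσ hα.1
  · apply Integrable.mono' (g := fun α : ℝ =>
      Real.exp (σ ^ 2 / 2 + μ) / (σ * Real.sqrt (2 * Real.pi)) * α ^ (-2 : ℝ))
      ((integrableOn_Ioi_rpow_of_lt (by norm_num) one_pos).const_mul _)
    · exact (hcont.mono (Set.Ioi_subset_Ioi zero_le_one)).aestronglyMeasurable measurableSet_Ioi
    · filter_upwards [ae_restrict_mem measurableSet_Ioi] with α hα
      have hα0 : (0:ℝ) < α := lt_trans one_pos hα
      rw [Real.norm_eq_abs, abs_of_pos (lognormalPdf_pos hσ hα0)]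
      exact lognormalPdf_le_rpow hσ hα0

lemma integrand_integrableOn {μ σ : ℝ} (hσ : 0 < σ) {x : ℝ} (hx : 0 ≤ x) :
    IntegrableOn (fun α => Real.exp (-α * x) * lognormalPdf μ σ α) (Set.Ioi 0) := by
  apply Integrable.mono' (lognormalPdf_integrableOn hσ)
  · apply ContinuousOn.aestronglyMeasurable _ measurableSet_Ioi
    exact (Real.continuous_exp.comp (continuous_id.neg.mul continuous_const)).continuousOn.mul
      (lognormalPdf_continuousOn hσ)
  · filter_upwards [ae_restrict_mem measurableSet_Ioi] with α hα
    have hpos := lognormalPdf_pos (μ := μ) hσ hα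
    rw [Real.norm_eq_abs, abs_of_pos (by positivity)]
    calc Real.exp (-α * x) * lognormalPdf μ σ α
        ≤ 1 * lognormalPdf μ σ α := by
          apply mul_le_mul_of_nonneg_right _ hpos.le
          rw [Real.exp_le_one_iff]
          have : (0:ℝ) < α := hα
          nlinarith
      _ = lognormalPdf μ σ α := one_mul _

lemma lnLaplace_pos {μ σ : ℝ} (hσ : 0 < σ) {x : ℝ} (hx : 0 ≤ x) :
    0 < lnLaplace μ σ x := by
  rw [lnLaplace, setIntegral_pos_iff_support_of_nonneg_ae]
  · refine lt_of_lt_of_le ?_ (measure_mono (s := Set.Ioi (1:ℝ)) ?_)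
    · rw [Real.volume_Ioi]; exact ENNReal.zero_lt_top
    · intro α hα
      have hα0 : (0:ℝ) < α := lt_trans one_pos hα
      refine ⟨?_, hα0⟩
      simp only [Function.mem_support]
      have := lognormalPdf_pos (μ := μ) hσ hα0
      positivity
  · filter_upwards [ae_restrict_mem measurableSet_Ioi] with α hα
    have := lognormalPdf_pos (μ := μ) hσ hα
    positivity
  · exact integrand_integrableOn hσ hx

lemma lnLaplace_nonneg {μ σ : ℝ} (hσ : 0 < σ) {x : ℝ} (hx : 0 ≤ x) :
    0 ≤ lnLaplace μ σ x := (lnLaplace_pos hσ hx).le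

lemma setPdf_integral_pos {μ σ : ℝ} (hσ : 0 < σ) {s : ℝ} (hs : 0 < s) :
    0 < ∫ α in Set.Ioc 0 s, lognormalPdf μ σ α := by
  rw [setIntegral_pos_iff_support_of_nonneg_ae]
  · refine lt_of_lt_of_le ?_ (measure_mono (s := Set.Ioc 0 s) ?_)
    · rw [Real.volume_Ioc]; simpa using hs
    · intro α hα
      exact ⟨ne_of_gt (lognormalPdf_pos hσ hα.1), hα⟩
  · filter_upwards [ae_restrict_mem measurableSet_Ioc] with α hα
    exact (lognormalPdf_pos hσ hα.1).le
  · exact (lognormalPdf_integrableOn hσ).mono_set Set.Ioc_subset_Ioi_self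

lemma lognormalPdf_shift {μ σ : ℝ} (hσ : 0 < σ) (ν : ℝ) (β : ℝ) :
    lognormalPdf (μ + ν) σ β =
      lognormalPdf μ σ β * Real.exp (ν / σ ^ 2 * (Real.log β - (μ + ν / 2))) := by
  unfold lognormalPdf
  conv_rhs => rw [mul_assoc, ← Real.exp_add]
  congr 1
  have : σ ≠ 0 := hσ.ne'
  field_simp
  ring

lemma integrand_nonneg_ae {μ σ : ℝ} (hσ : 0 < σ) (x : ℝ) :
    0 ≤ᵐ[volume.restrict (Set.Ioi 0)]
      fun β : ℝ => Real.exp (-β * x) * lognormalPdf μ σ β := by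
  filter_upwards [ae_restrict_mem measurableSet_Ioi] with β hβ
  have := lognormalPdf_pos (μ := μ) hσ hβ
  positivity

lemma lnLaplace_scale {μ σ : ℝ} (hσ : 0 < σ) {c : ℝ} (hc : 0 < c) (x : ℝ) :
    lnLaplace μ σ (c * x) = lnLaplace (μ + Real.log c) σ x := by
  unfold lnLaplace
  have key := integral_comp_mul_left_Ioi
    (fun β => Real.exp (-β * x) * lognormalPdf (μ + Real.log c) σ β) 0 hc
  rw [mul_zero] at key
  have hpt : Set.EqOn (fun α => Real.exp (-α * (c * x)) * lognormalPdf μ σ α)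
      (fun α => c * (Real.exp (-(c * α) * x) * lognormalPdf (μ + Real.log c) σ (c * α)))
      (Set.Ioi 0) := by
    intro α hα
    have hα0 : (0:ℝ) < α := hα
    have hlog : Real.log (c * α) = Real.log c + Real.log α := Real.log_mul hc.ne' hα0.ne'
    simp only
    unfold lognormalPdf
    rw [hlog, show Real.log c + Real.log α - (μ + Real.log c) = Real.log α - μ by ring,
      show -(c * α) * x = -α * (c * x) by ring]
    have h1 : α ≠ 0 := hα0.ne'
    have h2 : σ ≠ 0 := hσ.ne'
    have h3 : Real.sqrt (2 * Real.pi) ≠ 0 := sqrt2pi_pos.ne'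
    have h4 : c ≠ 0 := hc.ne'
    field_simp
  rw [setIntegral_congr_fun measurableSet_Ioi hpt, integral_const_mul, key, smul_eq_mul,
    ← mul_assoc, mul_inv_cancel₀ hc.ne', one_mul]

end Aux

/-- For every `c > 1`, `L(cx)/L(x) → 0` as `x → ∞`. -/
theorem lognormal_laplace_ratio_tendsto_zero (μ σ : ℝ) (hσ : 0 < σ) (c : ℝ) (hc : 1 < c) :
    Tendsto (fun x : ℝ => lnLaplace μ σ (c * x) / lnLaplace μ σ x) atTop (nhds 0) := by
  have hc0 : (0:ℝ) < c := lt_trans one_pos hc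
  have hfun : (fun x : ℝ => lnLaplace μ σ (c * x) / lnLaplace μ σ x)
      = fun x => lnLaplace (μ + Real.log c) σ x / lnLaplace μ σ x :=
    funext fun x => by rw [lnLaplace_scale hσ hc0]
  rw [hfun, NormedAddCommGroup.tendsto_nhds_zero]
  intro ε hε
  have hlogc : 0 < Real.log c := Real.log_pos hc
  have hσ2 : σ ^ 2 ≠ 0 := by positivity
  obtain ⟨δ, hδ, hrδ⟩ : ∃ δ : ℝ, 0 < δ ∧
      Real.exp (Real.log c / σ ^ 2 * (Real.log δ - (μ + Real.log c / 2))) = ε / 2 := by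
    refine ⟨Real.exp ((μ + Real.log c / 2) + Real.log (ε / 2) / (Real.log c / σ ^ 2)),
      Real.exp_pos _, ?_⟩
    rw [Real.log_exp, show Real.log c / σ ^ 2 *
        ((μ + Real.log c / 2) + Real.log (ε / 2) / (Real.log c / σ ^ 2) - (μ + Real.log c / 2))
        = Real.log (ε / 2) by field_simp; ring]
    exact Real.exp_log (by positivity)
  have hF0 : 0 < ∫ α in Set.Ioc 0 (δ / 2), lognormalPdf μ σ α :=
    setPdf_integral_pos hσ (by positivity)
  set F := ∫ α in Set.Ioc 0 (δ / 2), lognormalPdf μ σ α with hFdef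
  have hLν1 : 0 < lnLaplace (μ + Real.log c) σ 1 := lnLaplace_pos hσ zero_le_one
  have htend : Tendsto (fun x : ℝ =>
      Real.exp δ * lnLaplace (μ + Real.log c) σ 1 / F * Real.exp (-(δ / 2) * x))
      atTop (nhds 0) := by
    have h1 : Tendsto (fun x : ℝ => -(δ / 2) * x) atTop atBot :=
      Tendsto.const_mul_atTop_of_neg (by linarith) tendsto_id
    have h2 : Tendsto (fun x : ℝ => Real.exp (-(δ / 2) * x)) atTop (nhds 0) :=
      Real.tendsto_exp_comp_nhds_zero.2 h1
    have h3 := h2.const_mul (Real.exp δ * lnLaplace (μ + Real.log c) σ 1 / F)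
    simpa using h3
  filter_upwards [eventually_ge_atTop (1:ℝ),
    htend.eventually_lt_const (show (0:ℝ) < ε / 2 by positivity)] with x hx1 hx2
  have hx0 : (0:ℝ) ≤ x := le_trans zero_le_one hx1
  have hLμ : 0 < lnLaplace μ σ x := lnLaplace_pos hσ hx0
  have hLν : 0 < lnLaplace (μ + Real.log c) σ x := lnLaplace_pos hσ hx0
  have Iν : IntegrableOn (fun β : ℝ => Real.exp (-β * x) * lognormalPdf (μ + Real.log c) σ β)
      (Set.Ioi 0) := integrand_integrableOn hσ hx0
  have Iμ : IntegrableOn (fun β : ℝ => Real.exp (-β * x) * lognormalPdf μ σ β)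
      (Set.Ioi 0) := integrand_integrableOn hσ hx0
  have Iν1 : IntegrableOn (fun β : ℝ => Real.exp (-β * 1) * lognormalPdf (μ + Real.log c) σ β)
      (Set.Ioi 0) := integrand_integrableOn hσ zero_le_one
  -- split the integral
  have hsplit : lnLaplace (μ + Real.log c) σ x =
      (∫ β in Set.Ioc 0 δ, Real.exp (-β * x) * lognormalPdf (μ + Real.log c) σ β)
      + ∫ β in Set.Ioi δ, Real.exp (-β * x) * lognormalPdf (μ + Real.log c) σ β := by
    rw [lnLaplace, ← setIntegral_union (Set.Ioc_disjoint_Ioi le_rfl) measurableSet_Ioi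
      (Iν.mono_set Set.Ioc_subset_Ioi_self) (Iν.mono_set (Set.Ioi_subset_Ioi hδ.le)),
      Set.Ioc_union_Ioi_eq_Ioi hδ.le]
  -- piece 1
  have hpiece1 : (∫ β in Set.Ioc 0 δ, Real.exp (-β * x) * lognormalPdf (μ + Real.log c) σ β)
      ≤ ε / 2 * lnLaplace μ σ x := by
    have step1 : (∫ β in Set.Ioc 0 δ, Real.exp (-β * x) * lognormalPdf (μ + Real.log c) σ β)
        ≤ ∫ β in Set.Ioc 0 δ, ε / 2 * (Real.exp (-β * x) * lognormalPdf μ σ β) := by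
      apply setIntegral_mono_on (Iν.mono_set Set.Ioc_subset_Ioi_self)
        ((Iμ.mono_set Set.Ioc_subset_Ioi_self).const_mul _) measurableSet_Ioc
      intro β hβ
      have hβ0 : 0 < β := hβ.1
      have hpdfμ := lognormalPdf_pos (μ := μ) hσ hβ0
      have hratio : Real.exp (Real.log c / σ ^ 2 * (Real.log β - (μ + Real.log c / 2)))
          ≤ ε / 2 := by
        rw [← hrδ]
        apply Real.exp_le_exp.2
        have hlog := Real.log_le_log hβ0 hβ.2
        have hknn : 0 ≤ Real.log c / σ ^ 2 := by positivity
        nlinarith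
      calc Real.exp (-β * x) * lognormalPdf (μ + Real.log c) σ β
          = Real.exp (-β * x) * lognormalPdf μ σ β
            * Real.exp (Real.log c / σ ^ 2 * (Real.log β - (μ + Real.log c / 2))) := by
            rw [lognormalPdf_shift hσ]; ring
        _ ≤ Real.exp (-β * x) * lognormalPdf μ σ β * (ε / 2) := by
            apply mul_le_mul_of_nonneg_left hratio (by positivity)
        _ = ε / 2 * (Real.exp (-β * x) * lognormalPdf μ σ β) := by ring
    refine step1.trans ?_
    rw [integral_const_mul]
    apply mul_le_mul_of_nonneg_left _ (by positivity)
    rw [lnLaplace]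
    exact setIntegral_mono_set Iμ (integrand_nonneg_ae hσ x)
      Set.Ioc_subset_Ioi_self.eventuallyLE
  -- piece 2
  have hpiece2 : (∫ β in Set.Ioi δ, Real.exp (-β * x) * lognormalPdf (μ + Real.log c) σ β)
      ≤ Real.exp δ * Real.exp (-δ * x) * lnLaplace (μ + Real.log c) σ 1 := by
    have step1 : (∫ β in Set.Ioi δ, Real.exp (-β * x) * lognormalPdf (μ + Real.log c) σ β)
        ≤ ∫ β in Set.Ioi δ, Real.exp (-δ * (x - 1))
          * (Real.exp (-β * 1) * lognormalPdf (μ + Real.log c) σ β) := by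
      apply setIntegral_mono_on (Iν.mono_set (Set.Ioi_subset_Ioi hδ.le))
        ((Iν1.mono_set (Set.Ioi_subset_Ioi hδ.le)).const_mul _) measurableSet_Ioi
      intro β hβ
      have hβδ : δ < β := hβ
      have hβ0 : 0 < β := lt_trans hδ hβδ
      have hpdf := lognormalPdf_pos (μ := μ + Real.log c) hσ hβ0
      rw [← mul_assoc, ← Real.exp_add]
      apply mul_le_mul_of_nonneg_right _ hpdf.le
      apply Real.exp_le_exp.2
      nlinarith
    refine step1.trans ?_
    rw [integral_const_mul]
    have step2 : (∫ β in Set.Ioi δ, Real.exp (-β * 1) * lognormalPdf (μ + Real.log c) σ β)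
        ≤ lnLaplace (μ + Real.log c) σ 1 := by
      rw [lnLaplace]
      exact setIntegral_mono_set Iν1 (integrand_nonneg_ae hσ 1)
        (Set.Ioi_subset_Ioi hδ.le).eventuallyLE
    calc Real.exp (-δ * (x - 1))
          * ∫ β in Set.Ioi δ, Real.exp (-β * 1) * lognormalPdf (μ + Real.log c) σ β
        ≤ Real.exp (-δ * (x - 1)) * lnLaplace (μ + Real.log c) σ 1 :=
          mul_le_mul_of_nonneg_left step2 (Real.exp_pos _).le
      _ = Real.exp δ * Real.exp (-δ * x) * lnLaplace (μ + Real.log c) σ 1 := by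
          rw [← Real.exp_add, show δ + -δ * x = -δ * (x - 1) by ring]
  -- lower bound
  have hlower : Real.exp (-(δ / 2) * x) * F ≤ lnLaplace μ σ x := by
    have step1 : (∫ β in Set.Ioc 0 (δ / 2), Real.exp (-(δ / 2) * x) * lognormalPdf μ σ β)
        ≤ ∫ β in Set.Ioc 0 (δ / 2), Real.exp (-β * x) * lognormalPdf μ σ β := by
      apply setIntegral_mono_on
        (((lognormalPdf_integrableOn hσ).mono_set Set.Ioc_subset_Ioi_self).const_mul _)
        (Iμ.mono_set Set.Ioc_subset_Ioi_self) measurableSet_Ioc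
      intro β hβ
      apply mul_le_mul_of_nonneg_right _ (lognormalPdf_pos hσ hβ.1).le
      apply Real.exp_le_exp.2
      nlinarith [hβ.1, hβ.2]
    have step2 : (∫ β in Set.Ioc 0 (δ / 2), Real.exp (-β * x) * lognormalPdf μ σ β)
        ≤ lnLaplace μ σ x := by
      rw [lnLaplace]
      exact setIntegral_mono_set Iμ (integrand_nonneg_ae hσ x)
        Set.Ioc_subset_Ioi_self.eventuallyLE
    calc Real.exp (-(δ / 2) * x) * F
        = ∫ β in Set.Ioc 0 (δ / 2), Real.exp (-(δ / 2) * x) * lognormalPdf μ σ β := by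
          rw [integral_const_mul]
      _ ≤ lnLaplace μ σ x := step1.trans step2
  -- combine
  rw [Real.norm_eq_abs, abs_of_nonneg (div_nonneg hLν.le hLμ.le), div_lt_iff₀ hLμ]
  have hA : lnLaplace (μ + Real.log c) σ x ≤ ε / 2 * lnLaplace μ σ x
      + Real.exp δ * Real.exp (-δ * x) * lnLaplace (μ + Real.log c) σ 1 := by
    rw [hsplit]; exact add_le_add hpiece1 hpiece2
  have h5 : Real.exp δ * lnLaplace (μ + Real.log c) σ 1 / F * Real.exp (-(δ / 2) * x)
      * (Real.exp (-(δ / 2) * x) * F)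
      < ε / 2 * (Real.exp (-(δ / 2) * x) * F) :=
    mul_lt_mul_of_pos_right hx2 (by positivity)
  have h6 : Real.exp δ * lnLaplace (μ + Real.log c) σ 1 / F * Real.exp (-(δ / 2) * x)
      * (Real.exp (-(δ / 2) * x) * F)
      = Real.exp δ * Real.exp (-δ * x) * lnLaplace (μ + Real.log c) σ 1 := by
    rw [show (-δ * x : ℝ) = -(δ / 2) * x + -(δ / 2) * x by ring, Real.exp_add]
    field_simp
  have h7 : ε / 2 * (Real.exp (-(δ / 2) * x) * F) ≤ ε / 2 * lnLaplace μ σ x :=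
    mul_le_mul_of_nonneg_left hlower (by positivity)
  linarith
end

section
/- In the setting of mixed-logit demand with log-normal mixing, for k ≠ j there exists a constant C > 0 (depending on δ, M) such that along any ray p ∈ ℝ_{++}^J, |∂²_{p_j p_k} q_j(λ p)| ≤ C L''(c_{jk} λ p_j) for all λ > 0, where c_{jk} = (p_j + p_k)/p_j > 1 and L is the log-normal Laplace transform. -/
open MeasureTheory Real Filter

/-- Logit choice probability of product `j` at prices `p`, mean utilities `δ`,
and price coefficient `α`. -/
noncomputable def logitShare {J : ℕ} (δ : Fin J → ℝ) (j : Fin J) (p : Fin J → ℝ) (α : ℝ) : ℝ :=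
  Real.exp (δ j - α * p j) / (1 + ∑ l, Real.exp (δ l - α * p l))

/-- Mixed-logit demand for product `j` with log-normal mixing over the price coefficient. -/
noncomputable def qLN {J : ℕ} (δ : Fin J → ℝ) (M μ σ : ℝ) (j : Fin J) (p : Fin J → ℝ) : ℝ :=
  M * ∫ α in Set.Ioi (0 : ℝ), logitShare δ j p α * lognormalPdf μ σ α

/-- Partial derivative of `F : (Fin J → ℝ) → ℝ` in the `k`-th coordinate at `p`. -/
noncomputable def pd {J : ℕ} (F : (Fin J → ℝ) → ℝ) (k : Fin J) (p : Fin J → ℝ) : ℝ :=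
  deriv (fun t => F (Function.update p k t)) (p k)


open Set

namespace QLN

variable {μ σ : ℝ}

lemma sqrt2pi_pos : 0 < Real.sqrt (2 * Real.pi) :=
  Real.sqrt_pos.2 (by positivity)

lemma pdf_nonneg (hσ : 0 < σ) {α : ℝ} (hα : 0 < α) : 0 ≤ lognormalPdf μ σ α := by
  unfold lognormalPdf
  have h1 : 0 < α * σ * Real.sqrt (2 * Real.pi) := by positivity
  positivity

lemma pdf_continuousOn (hσ : 0 < σ) : ContinuousOn (lognormalPdf μ σ) (Ioi 0) := by
  unfold lognormalPdf
  have hlog : ContinuousOn Real.log (Ioi (0:ℝ)) :=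
    Real.continuousOn_log.mono (by intro x hx; exact ne_of_gt hx)
  apply ContinuousOn.mul
  · apply ContinuousOn.div continuousOn_const
    · fun_prop
    · intro x hx
      have : (0:ℝ) < x := hx
      positivity
  · apply Real.continuous_exp.comp_continuousOn
    apply ContinuousOn.div _ continuousOn_const (by intro x _; positivity)
    apply ContinuousOn.neg
    exact (hlog.sub continuousOn_const).pow 2

lemma pdf_eq (hσ : 0 < σ) {α : ℝ} (hα : 0 < α) :
    lognormalPdf μ σ α =
      Real.exp (-(Real.log α) + -(Real.log α - μ) ^ 2 / (2 * σ ^ 2)) /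
        (σ * Real.sqrt (2 * Real.pi)) := by
  unfold lognormalPdf
  rw [Real.exp_add, Real.exp_neg, Real.exp_log hα]
  have h1 : α ≠ 0 := ne_of_gt hα
  have h2 : σ ≠ 0 := ne_of_gt hσ
  have h3 : Real.sqrt (2 * Real.pi) ≠ 0 := ne_of_gt sqrt2pi_pos
  field_simp

lemma pdf_le_const (hσ : 0 < σ) {α : ℝ} (hα : 0 < α) :
    lognormalPdf μ σ α ≤ Real.exp (σ ^ 2 / 2 - μ) / (σ * Real.sqrt (2 * Real.pi)) := by
  rw [pdf_eq hσ hα]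
  apply div_le_div_of_nonneg_right _ (by positivity)
  · apply Real.exp_le_exp.2
    set u := Real.log α
    have h2σ : (0:ℝ) < 2 * σ ^ 2 := by positivity
    have : -(u - μ) ^ 2 / (2 * σ ^ 2) ≤ σ ^ 2 / 2 - μ + u := by
      rw [div_le_iff₀ h2σ]; nlinarith [sq_nonneg (u - μ + σ ^ 2)]
    linarith

lemma pdf_le_inv_sq (hσ : 0 < σ) {α : ℝ} (hα : 0 < α) :
    lognormalPdf μ σ α ≤ Real.exp (μ + σ ^ 2 / 2) / (σ * Real.sqrt (2 * Real.pi)) / α ^ 2 := by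
  rw [pdf_eq hσ hα]
  have hα2 : α ^ 2 = Real.exp (2 * Real.log α) := by
    rw [← Real.exp_log hα, ← Real.exp_nat_mul]; norm_num [mul_comm]
  rw [hα2, div_div]
  have hr : Real.exp (μ + σ ^ 2 / 2) / (σ * Real.sqrt (2 * Real.pi) * Real.exp (2 * Real.log α))
      = Real.exp (μ + σ ^ 2 / 2 - 2 * Real.log α) / (σ * Real.sqrt (2 * Real.pi)) := by
    rw [Real.exp_sub]
    have h3 : Real.sqrt (2 * Real.pi) ≠ 0 := ne_of_gt sqrt2pi_pos
    have h2 : σ ≠ 0 := ne_of_gt hσ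
    have h4 : Real.exp (2 * Real.log α) ≠ 0 := Real.exp_ne_zero _
    field_simp
  rw [hr]
  apply div_le_div_of_nonneg_right _ (by positivity)
  apply Real.exp_le_exp.2
  set u := Real.log α
  have h2σ : (0:ℝ) < 2 * σ ^ 2 := by positivity
  have : -(u - μ) ^ 2 / (2 * σ ^ 2) ≤ μ + σ ^ 2 / 2 - u := by
    rw [div_le_iff₀ h2σ]; nlinarith [sq_nonneg (u - μ - σ ^ 2)]
  linarith

end QLN

-- PART 2
namespace QLN2
open QLN
variable {μ σ : ℝ}

lemma pdf_integrable (hσ : 0 < σ) : IntegrableOn (lognormalPdf μ σ) (Ioi 0) := by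
  have h01 : IntegrableOn (lognormalPdf μ σ) (Ioc 0 1) := by
    have hc : IntegrableOn (fun _ : ℝ => Real.exp (σ ^ 2 / 2 - μ) / (σ * Real.sqrt (2 * Real.pi)))
        (Ioc (0:ℝ) 1) := integrableOn_const measure_Ioc_lt_top.ne
    apply Integrable.mono' hc
    · exact ((pdf_continuousOn hσ).mono Ioc_subset_Ioi_self).aestronglyMeasurable measurableSet_Ioc
    · filter_upwards [ae_restrict_mem measurableSet_Ioc] with α hα
      rw [Real.norm_eq_abs, abs_of_nonneg (pdf_nonneg hσ hα.1)]
      exact pdf_le_const hσ hα.1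
  have h1 : IntegrableOn (lognormalPdf μ σ) (Ioi 1) := by
    have hi : IntegrableOn
        (fun α : ℝ => (Real.exp (μ + σ ^ 2 / 2) / (σ * Real.sqrt (2 * Real.pi))) * α ^ (-2 : ℝ))
        (Ioi 1) :=
      (integrableOn_Ioi_rpow_of_lt (by norm_num) one_pos).const_mul _
    apply Integrable.mono' hi
    · exact ((pdf_continuousOn hσ).mono (Ioi_subset_Ioi zero_le_one)).aestronglyMeasurable
        measurableSet_Ioi
    · filter_upwards [ae_restrict_mem measurableSet_Ioi] with α hα
      have hα0 : (0:ℝ) < α := lt_trans one_pos hα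
      have hrw : α ^ (-2 : ℝ) = (α ^ 2)⁻¹ := by
        rw [Real.rpow_neg hα0.le, ← Real.rpow_natCast α 2]; norm_num
      rw [Real.norm_eq_abs, abs_of_nonneg (pdf_nonneg hσ hα0), hrw, ← div_eq_mul_inv]
      exact pdf_le_inv_sq hσ hα0
  have : Ioi (0:ℝ) = Ioc 0 1 ∪ Ioi 1 := (Ioc_union_Ioi_eq_Ioi zero_le_one).symm
  rw [this]
  exact h01.union h1

lemma integrable_of_le_pdf (hσ : 0 < σ) {g : ℝ → ℝ} (c : ℝ)
    (hg : AEStronglyMeasurable g (volume.restrict (Ioi 0)))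
    (hle : ∀ α ∈ Ioi (0:ℝ), ‖g α‖ ≤ c * lognormalPdf μ σ α) :
    IntegrableOn g (Ioi 0) := by
  apply Integrable.mono' ((pdf_integrable hσ).const_mul c) hg
  filter_upwards [ae_restrict_mem measurableSet_Ioi] with α hα
  exact hle α hα

lemma lin_exp_le {s α : ℝ} (hs : 0 < s) (hα : 0 < α) :
    α * Real.exp (-(α * s)) ≤ 1 / s := by
  have h := Real.add_one_le_exp (α * s)
  have hE : (0:ℝ) < Real.exp (α * s) := Real.exp_pos _
  rw [Real.exp_neg, mul_comm, inv_mul_le_iff₀ hE]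
  rw [mul_one_div, le_div_iff₀ hs]
  nlinarith

lemma sq_exp_le {s α : ℝ} (hs : 0 < s) (hα : 0 < α) :
    α ^ 2 * Real.exp (-(α * s)) ≤ 4 / s ^ 2 := by
  have h := Real.add_one_le_exp (α * s / 2)
  have hEE : Real.exp (α * s / 2) * Real.exp (α * s / 2) = Real.exp (α * s) := by
    rw [← Real.exp_add]; ring_nf
  have h2 : α * s / 2 * (α * s / 2) ≤ Real.exp (α * s) := by
    have hx : 0 ≤ α * s / 2 := by positivity
    nlinarith
  have hE : (0:ℝ) < Real.exp (α * s) := Real.exp_pos _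
  rw [Real.exp_neg, mul_comm, inv_mul_le_iff₀ hE]
  rw [mul_div_assoc', le_div_iff₀ (by positivity : (0:ℝ) < s ^ 2)]
  nlinarith

lemma int_lin (hσ : 0 < σ) {s : ℝ} (hs : 0 < s) (c : ℝ) :
    IntegrableOn (fun α => c * (α * Real.exp (-(α * s))) * lognormalPdf μ σ α) (Ioi 0) := by
  apply integrable_of_le_pdf hσ (|c| * (1 / s))
  · refine (ContinuousOn.mul ?_ (pdf_continuousOn hσ)).aestronglyMeasurable measurableSet_Ioi
    fun_prop
  · intro α hα
    have hα0 : (0:ℝ) < α := hα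
    rw [Real.norm_eq_abs, abs_mul, abs_mul, abs_of_nonneg (pdf_nonneg hσ hα0),
      abs_of_nonneg (by positivity : (0:ℝ) ≤ α * Real.exp (-(α * s)))]
    exact mul_le_mul_of_nonneg_right
      (mul_le_mul_of_nonneg_left (lin_exp_le hs hα0) (abs_nonneg c)) (pdf_nonneg hσ hα0)

lemma int_sq (hσ : 0 < σ) {s : ℝ} (hs : 0 < s) (c : ℝ) :
    IntegrableOn (fun α => c * (α ^ 2 * Real.exp (-(α * s))) * lognormalPdf μ σ α) (Ioi 0) := by
  apply integrable_of_le_pdf hσ (|c| * (4 / s ^ 2))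
  · refine (ContinuousOn.mul ?_ (pdf_continuousOn hσ)).aestronglyMeasurable measurableSet_Ioi
    fun_prop
  · intro α hα
    have hα0 : (0:ℝ) < α := hα
    rw [Real.norm_eq_abs, abs_mul, abs_mul, abs_of_nonneg (pdf_nonneg hσ hα0),
      abs_of_nonneg (by positivity : (0:ℝ) ≤ α ^ 2 * Real.exp (-(α * s)))]
    exact mul_le_mul_of_nonneg_right
      (mul_le_mul_of_nonneg_left (sq_exp_le hs hα0) (abs_nonneg c)) (pdf_nonneg hσ hα0)

lemma int_bdd (hσ : 0 < σ) (c : ℝ) {g : ℝ → ℝ}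
    (hg : ContinuousOn g (Ioi 0)) (hle : ∀ α ∈ Ioi (0:ℝ), |g α| ≤ c * lognormalPdf μ σ α) :
    IntegrableOn g (Ioi 0) := by
  apply integrable_of_le_pdf hσ c (hg.aestronglyMeasurable measurableSet_Ioi)
  intro α hα; rw [Real.norm_eq_abs]; exact hle α hα

end QLN2


namespace QLN3
open QLN QLN2
variable {μ σ : ℝ}

lemma lap_d1 (hσ : 0 < σ) {x : ℝ} (hx : 0 < x) :
    HasDerivAt (lnLaplace μ σ)
      (∫ α in Ioi (0:ℝ), -α * Real.exp (-α * x) * lognormalPdf μ σ α) x := by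
  have key := hasDerivAt_integral_of_dominated_loc_of_deriv_le (μ := volume.restrict (Ioi 0))
    (F := fun y α => Real.exp (-α * y) * lognormalPdf μ σ α)
    (F' := fun y α => -α * Real.exp (-α * y) * lognormalPdf μ σ α)
    (bound := fun α => 1 * (α * Real.exp (-(α * (x / 2)))) * lognormalPdf μ σ α)
    (x₀ := x) (Metric.ball_mem_nhds x (half_pos hx)) ?_ ?_ ?_ ?_ ?_ ?_
  · exact key.2
  · apply Filter.Eventually.of_forall
    intro y
    refine ((ContinuousOn.mul ?_ (pdf_continuousOn hσ)).aestronglyMeasurable measurableSet_Ioi)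
    fun_prop
  · apply int_bdd (μ := μ) hσ 1
    · refine ContinuousOn.mul ?_ (pdf_continuousOn hσ); fun_prop
    · intro α hα
      have hα0 : (0:ℝ) < α := hα
      rw [abs_mul, abs_of_nonneg (pdf_nonneg hσ hα0), one_mul,
        abs_of_nonneg (Real.exp_nonneg _)]
      exact mul_le_of_le_one_left (pdf_nonneg hσ hα0) (Real.exp_le_one_iff.2 (by nlinarith))
  · refine ((ContinuousOn.mul ?_ (pdf_continuousOn hσ)).aestronglyMeasurable measurableSet_Ioi)
    fun_prop
  · filter_upwards [ae_restrict_mem measurableSet_Ioi] with α hα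
    intro y hy
    have hα0 : (0:ℝ) < α := hα
    have hy2 : x / 2 < y := by
      have := Metric.mem_ball.1 hy
      rw [Real.dist_eq] at this
      cases abs_lt.1 this with
      | intro h1 h2 => linarith
    rw [Real.norm_eq_abs, abs_mul, abs_mul, abs_of_nonneg (pdf_nonneg hσ hα0),
      abs_of_nonneg (Real.exp_nonneg _), abs_neg, abs_of_nonneg hα0.le, one_mul]
    apply mul_le_mul_of_nonneg_right _ (pdf_nonneg hσ hα0)
    apply mul_le_mul_of_nonneg_left _ hα0.le
    apply Real.exp_le_exp.2
    nlinarith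
  · exact int_lin hσ (half_pos hx) 1
  · filter_upwards [ae_restrict_mem measurableSet_Ioi] with α hα
    intro y hy
    have h0 : HasDerivAt (fun y : ℝ => -α * y) (-α * 1) y := (hasDerivAt_id y).const_mul (-α)
    have h1 := (h0.exp).mul_const (lognormalPdf μ σ α)
    exact h1.congr_deriv (by ring)

lemma lap_d2 (hσ : 0 < σ) {x : ℝ} (hx : 0 < x) :
    HasDerivAt (fun y => ∫ α in Ioi (0:ℝ), -α * Real.exp (-α * y) * lognormalPdf μ σ α)
      (∫ α in Ioi (0:ℝ), α ^ 2 * Real.exp (-α * x) * lognormalPdf μ σ α) x := by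
  have key := hasDerivAt_integral_of_dominated_loc_of_deriv_le (μ := volume.restrict (Ioi 0))
    (F := fun y α => -α * Real.exp (-α * y) * lognormalPdf μ σ α)
    (F' := fun y α => α ^ 2 * Real.exp (-α * y) * lognormalPdf μ σ α)
    (bound := fun α => 1 * (α ^ 2 * Real.exp (-(α * (x / 2)))) * lognormalPdf μ σ α)
    (x₀ := x) (Metric.ball_mem_nhds x (half_pos hx)) ?_ ?_ ?_ ?_ ?_ ?_
  · exact key.2
  · apply Filter.Eventually.of_forall
    intro y
    refine ((ContinuousOn.mul ?_ (pdf_continuousOn hσ)).aestronglyMeasurable measurableSet_Ioi)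
    fun_prop
  · apply Integrable.mono' (int_lin (μ := μ) hσ hx 1)
    · refine ((ContinuousOn.mul ?_ (pdf_continuousOn hσ)).aestronglyMeasurable measurableSet_Ioi)
      fun_prop
    · filter_upwards [ae_restrict_mem measurableSet_Ioi] with α hα
      have hα0 : (0:ℝ) < α := hα
      rw [Real.norm_eq_abs, abs_mul, abs_mul, abs_neg, abs_of_nonneg hα0.le,
        abs_of_nonneg (Real.exp_nonneg _), abs_of_nonneg (pdf_nonneg hσ hα0), one_mul, neg_mul]
  · refine ((ContinuousOn.mul ?_ (pdf_continuousOn hσ)).aestronglyMeasurable measurableSet_Ioi)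
    fun_prop
  · filter_upwards [ae_restrict_mem measurableSet_Ioi] with α hα
    intro y hy
    have hα0 : (0:ℝ) < α := hα
    have hy2 : x / 2 < y := by
      have := Metric.mem_ball.1 hy
      rw [Real.dist_eq] at this
      cases abs_lt.1 this with
      | intro h1 h2 => linarith
    rw [Real.norm_eq_abs, abs_mul, abs_mul, abs_of_nonneg (pdf_nonneg hσ hα0),
      abs_of_nonneg (Real.exp_nonneg _), abs_of_nonneg (by positivity : (0:ℝ) ≤ α ^ 2), one_mul]
    apply mul_le_mul_of_nonneg_right _ (pdf_nonneg hσ hα0)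
    apply mul_le_mul_of_nonneg_left _ (by positivity)
    apply Real.exp_le_exp.2
    nlinarith
  · exact int_sq hσ (half_pos hx) 1
  · filter_upwards [ae_restrict_mem measurableSet_Ioi] with α hα
    intro y hy
    have h0 : HasDerivAt (fun y : ℝ => -α * y) (-α * 1) y := (hasDerivAt_id y).const_mul (-α)
    have h1 := ((h0.exp).const_mul (-α)).mul_const (lognormalPdf μ σ α)
    exact h1.congr_deriv (by ring)

lemma deriv2_lnLaplace (hσ : 0 < σ) {x : ℝ} (hx : 0 < x) :
    deriv (deriv (lnLaplace μ σ)) x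
      = ∫ α in Ioi (0:ℝ), α ^ 2 * Real.exp (-α * x) * lognormalPdf μ σ α := by
  have hev : deriv (lnLaplace μ σ)
      =ᶠ[nhds x] fun y => ∫ α in Ioi (0:ℝ), -α * Real.exp (-α * y) * lognormalPdf μ σ α := by
    filter_upwards [Ioi_mem_nhds hx] with y hy
    exact (lap_d1 hσ hy).deriv
  rw [hev.deriv_eq]
  exact (lap_d2 hσ hx).deriv

end QLN3


namespace QLN4
open QLN QLN2 QLN3

variable {J : ℕ} {δ : Fin J → ℝ} {μ σ : ℝ}

lemma denom_pos (δ : Fin J → ℝ) (v : Fin J → ℝ) (α : ℝ) :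
    0 < 1 + ∑ l, Real.exp (δ l - α * v l) := by
  have h : 0 ≤ ∑ l, Real.exp (δ l - α * v l) :=
    Finset.sum_nonneg fun l _ => (Real.exp_nonneg _)
  linarith

lemma denom_ge_one (δ : Fin J → ℝ) (v : Fin J → ℝ) (α : ℝ) :
    1 ≤ 1 + ∑ l, Real.exp (δ l - α * v l) := by
  have h : 0 ≤ ∑ l, Real.exp (δ l - α * v l) :=
    Finset.sum_nonneg fun l _ => (Real.exp_nonneg _)
  linarith

lemma term_le_denom (δ : Fin J → ℝ) (v : Fin J → ℝ) (α : ℝ) (m : Fin J) :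
    Real.exp (δ m - α * v m) ≤ 1 + ∑ l, Real.exp (δ l - α * v l) := by
  have h : Real.exp (δ m - α * v m) ≤ ∑ l, Real.exp (δ l - α * v l) :=
    Finset.single_le_sum (f := fun l => Real.exp (δ l - α * v l))
      (fun l _ => Real.exp_nonneg _) (Finset.mem_univ m)
  linarith

lemma share_nonneg (δ : Fin J → ℝ) (j : Fin J) (p : Fin J → ℝ) (α : ℝ) :
    0 ≤ logitShare δ j p α :=
  div_nonneg (Real.exp_nonneg _) (denom_pos δ p α).le

lemma share_le_one (δ : Fin J → ℝ) (j : Fin J) (p : Fin J → ℝ) (α : ℝ) :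
    logitShare δ j p α ≤ 1 :=
  (div_le_one (denom_pos δ p α)).2 (term_le_denom δ p α j)

lemma denom_hasDeriv (δ : Fin J → ℝ) (q : Fin J → ℝ) (α : ℝ) (m : Fin J) (t : ℝ) :
    HasDerivAt (fun t => ∑ l, Real.exp (δ l - α * Function.update q m t l))
      (-α * Real.exp (δ m - α * t)) t := by
  have h : ∀ l : Fin J, HasDerivAt (fun t => Real.exp (δ l - α * Function.update q m t l))
      (if l = m then -α * Real.exp (δ m - α * t) else 0) t := by
    intro l
    by_cases hl : l = m
    · subst hl
      simp only [Function.update_self]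
      rw [if_pos trivial]
      have h0 : HasDerivAt (fun t : ℝ => δ l - α * t) (-α) t := by
        have h1 : HasDerivAt (fun t : ℝ => α * t) (α * 1) t := (hasDerivAt_id t).const_mul α
        simpa using h1.const_sub (δ l)
      have h2 := h0.exp
      convert h2 using 1
      ring
    · simp only [Function.update_of_ne hl, if_neg hl]
      exact hasDerivAt_const t _
  have hsum := HasDerivAt.fun_sum (u := Finset.univ)
    (A := fun l t => Real.exp (δ l - α * Function.update q m t l))
    (A' := fun l => if l = m then -α * Real.exp (δ m - α * t) else 0)
    (fun l _ => h l)
  have heq : (-α * Real.exp (δ m - α * t))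
      = ∑ l : Fin J, (if l = m then -α * Real.exp (δ m - α * t) else 0) := by
    rw [Finset.sum_ite_eq' Finset.univ m]
    simp
  rw [heq]
  exact hsum

lemma denom_cont (δ : Fin J → ℝ) (v : Fin J → ℝ) :
    Continuous fun α : ℝ => 1 + ∑ l, Real.exp (δ l - α * v l) := by
  fun_prop

lemma pd_k_eq (hσ : 0 < σ) (M : ℝ) (δ : Fin J → ℝ) (j k : Fin J) (hkj : k ≠ j)
    (q : Fin J → ℝ) (hq : 0 < q j + q k) :
    pd (qLN δ M μ σ j) k q
      = M * ∫ α in Ioi (0:ℝ),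
          α * Real.exp (δ j - α * q j) * Real.exp (δ k - α * q k)
            / (1 + ∑ l, Real.exp (δ l - α * q l)) ^ 2 * lognormalPdf μ σ α := by
  set s : ℝ := (q j + q k) / 2 with hs
  have hs0 : 0 < s := by rw [hs]; linarith
  have key := hasDerivAt_integral_of_dominated_loc_of_deriv_le (μ := volume.restrict (Ioi 0))
    (F := fun t α => logitShare δ j (Function.update q k t) α * lognormalPdf μ σ α)
    (F' := fun t α => α * Real.exp (δ j - α * q j) * Real.exp (δ k - α * t)
      / (1 + ∑ l, Real.exp (δ l - α * Function.update q k t l)) ^ 2 * lognormalPdf μ σ α)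
    (bound := fun α => Real.exp (δ j + δ k) * (α * Real.exp (-(α * s))) * lognormalPdf μ σ α)
    (x₀ := q k) (Metric.ball_mem_nhds (q k) hs0) ?_ ?_ ?_ ?_ ?_ ?_
  · have hq' : Function.update q k (q k) = q := Function.update_eq_self k q
    have hder := key.2.const_mul M
    rw [pd]
    have hfun : (fun t => qLN δ M μ σ j (Function.update q k t))
        = fun t => M * ∫ α in Ioi (0:ℝ),
            logitShare δ j (Function.update q k t) α * lognormalPdf μ σ α := rfl
    rw [hfun, hder.deriv]
    congr 1
    simp only [hq']
  · apply Filter.Eventually.of_forall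
    intro t
    apply ContinuousOn.aestronglyMeasurable _ measurableSet_Ioi
    apply ContinuousOn.mul _ (pdf_continuousOn hσ)
    apply Continuous.continuousOn
    unfold logitShare
    exact Continuous.div (by fun_prop) (denom_cont δ _)
      (fun α => (denom_pos δ _ α).ne')
  · apply int_bdd (μ := μ) hσ 1
    · apply ContinuousOn.mul _ (pdf_continuousOn hσ)
      apply Continuous.continuousOn
      unfold logitShare
      exact Continuous.div (by fun_prop) (denom_cont δ _)
        (fun α => (denom_pos δ _ α).ne')
    · intro α hα
      have hα0 : (0:ℝ) < α := hα
      rw [abs_mul, abs_of_nonneg (pdf_nonneg hσ hα0),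
        abs_of_nonneg (share_nonneg δ j _ α), one_mul]
      exact mul_le_of_le_one_left (pdf_nonneg hσ hα0) (share_le_one δ j _ α)
  · apply ContinuousOn.aestronglyMeasurable _ measurableSet_Ioi
    apply ContinuousOn.mul _ (pdf_continuousOn hσ)
    apply Continuous.continuousOn
    exact Continuous.div (by fun_prop)
      ((denom_cont δ _).pow 2)
      (fun α => (pow_ne_zero 2 (denom_pos δ _ α).ne'))
  · filter_upwards [ae_restrict_mem measurableSet_Ioi] with α hα
    intro t ht
    have hα0 : (0:ℝ) < α := hα
    have ht' : q k - s < t := by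
      have := Metric.mem_ball.1 ht
      rw [Real.dist_eq] at this
      cases abs_lt.1 this with
      | intro h1 h2 => linarith
    have hqjt : s ≤ q j + t := by
      have h2s : q j + q k = 2 * s := by rw [hs]; ring
      linarith
    set D : ℝ := 1 + ∑ l, Real.exp (δ l - α * Function.update q k t l) with hD
    have hD1 : 1 ≤ D := denom_ge_one δ _ α
    have hD0 : 0 < D := lt_of_lt_of_le one_pos hD1
    have hA0 : 0 ≤ α * Real.exp (δ j - α * q j) * Real.exp (δ k - α * t) := by positivity
    rw [Real.norm_eq_abs, abs_mul, abs_of_nonneg (pdf_nonneg hσ hα0), abs_div,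
      abs_of_nonneg hA0, abs_of_nonneg (by positivity : (0:ℝ) ≤ D ^ 2)]
    apply mul_le_mul_of_nonneg_right _ (pdf_nonneg hσ hα0)
    calc α * Real.exp (δ j - α * q j) * Real.exp (δ k - α * t) / D ^ 2
        ≤ α * Real.exp (δ j - α * q j) * Real.exp (δ k - α * t) :=
          div_le_self hA0 (one_le_pow₀ hD1)
      _ = α * Real.exp (δ j + δ k - α * (q j + t)) := by
          rw [mul_assoc, ← Real.exp_add]; congr 1; ring
      _ ≤ α * Real.exp (δ j + δ k - α * s) := by
          apply mul_le_mul_of_nonneg_left _ hα0.le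
          apply Real.exp_le_exp.2
          have : α * s ≤ α * (q j + t) := mul_le_mul_of_nonneg_left hqjt hα0.le
          linarith
      _ = Real.exp (δ j + δ k) * (α * Real.exp (-(α * s))) := by
          rw [sub_eq_add_neg, Real.exp_add]; ring
  · exact int_lin hσ hs0 (Real.exp (δ j + δ k))
  · filter_upwards [ae_restrict_mem measurableSet_Ioi] with α hα
    intro t ht
    have hD := (denom_hasDeriv δ q α k t).const_add 1
    have hdiv := (hasDerivAt_const t (Real.exp (δ j - α * q j))).div hD
      (denom_pos δ (Function.update q k t) α).ne'
    have hfun : (fun t => logitShare δ j (Function.update q k t) α * lognormalPdf μ σ α)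
        = fun t => Real.exp (δ j - α * q j)
            / (1 + ∑ l, Real.exp (δ l - α * Function.update q k t l))
            * lognormalPdf μ σ α := by
      funext t
      unfold logitShare
      rw [Function.update_of_ne (Ne.symm hkj)]
    rw [hfun]
    exact (hdiv.mul_const (lognormalPdf μ σ α)).congr_deriv (by ring)

lemma Gbd (hσ : 0 < σ) (δ : Fin J → ℝ) (j k : Fin J) (q : Fin J → ℝ)
    {α : ℝ} (hα0 : 0 < α) (t : ℝ) :
    ‖α ^ 2 * Real.exp (δ k - α * q k) * Real.exp (δ j - α * t)
        * (2 * Real.exp (δ j - α * t)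
            - (1 + ∑ l, Real.exp (δ l - α * Function.update q j t l)))
        / (1 + ∑ l, Real.exp (δ l - α * Function.update q j t l)) ^ 3 * lognormalPdf μ σ α‖
      ≤ 3 * Real.exp (δ j + δ k) * (α ^ 2 * Real.exp (-(α * (t + q k))))
          * lognormalPdf μ σ α := by
  set D : ℝ := 1 + ∑ l, Real.exp (δ l - α * Function.update q j t l) with hDdef
  set N : ℝ := Real.exp (δ j - α * t) with hNdef
  set Ek : ℝ := Real.exp (δ k - α * q k) with hEkdef
  set f : ℝ := lognormalPdf μ σ α with hfdef
  have hD1 : 1 ≤ D := denom_ge_one δ _ α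
  have hD0 : 0 < D := lt_of_lt_of_le one_pos hD1
  have hN0 : 0 < N := Real.exp_pos _
  have hEk0 : 0 < Ek := Real.exp_pos _
  have hf0 : 0 ≤ f := pdf_nonneg hσ hα0
  have hND : N ≤ D := by
    have h := term_le_denom δ (Function.update q j t) α j
    rw [Function.update_self] at h
    exact h
  have h3 : |2 * N - D| ≤ 3 * D := by
    rw [abs_le]
    constructor <;> nlinarith
  have hA0 : (0:ℝ) ≤ α ^ 2 * Ek * N := by positivity
  have step1 : α ^ 2 * Ek * N * |2 * N - D| ≤ α ^ 2 * Ek * N * (3 * D) :=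
    mul_le_mul_of_nonneg_left h3 hA0
  have step2 : α ^ 2 * Ek * N * (3 * D) / D ^ 3 = 3 * (α ^ 2 * Ek * N) / D ^ 2 := by
    field_simp
  have step3 : 3 * (α ^ 2 * Ek * N) / D ^ 2 ≤ 3 * (α ^ 2 * Ek * N) :=
    div_le_self (by positivity) (one_le_pow₀ hD1)
  have hEN : Ek * N = Real.exp (δ j + δ k) * Real.exp (-(α * (t + q k))) := by
    rw [hEkdef, hNdef, ← Real.exp_add, ← Real.exp_add]
    congr 1
    ring
  have habs : ‖α ^ 2 * Ek * N * (2 * N - D) / D ^ 3 * f‖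
      = α ^ 2 * Ek * N * |2 * N - D| / D ^ 3 * f := by
    rw [Real.norm_eq_abs, abs_mul, abs_of_nonneg hf0, abs_div,
      abs_of_nonneg (by positivity : (0:ℝ) ≤ D ^ 3), abs_mul, abs_of_nonneg hA0]
  rw [habs]
  calc α ^ 2 * Ek * N * |2 * N - D| / D ^ 3 * f
      ≤ α ^ 2 * Ek * N * (3 * D) / D ^ 3 * f := by
        apply mul_le_mul_of_nonneg_right _ hf0
        rw [div_eq_mul_inv, div_eq_mul_inv]
        exact mul_le_mul_of_nonneg_right step1 (by positivity)
    _ = 3 * (α ^ 2 * Ek * N) / D ^ 2 * f := by rw [step2]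
    _ ≤ 3 * (α ^ 2 * Ek * N) * f := mul_le_mul_of_nonneg_right step3 hf0
    _ = 3 * Real.exp (δ j + δ k) * (α ^ 2 * Real.exp (-(α * (t + q k)))) * f := by
        have : 3 * (α ^ 2 * Ek * N) = 3 * (α ^ 2 * (Ek * N)) := by ring
        rw [this, hEN]
        ring

lemma pd_pd_bound (hσ : 0 < σ) (M : ℝ) (hM : 0 < M) (δ : Fin J → ℝ) (j k : Fin J)
    (hkj : k ≠ j) (q : Fin J → ℝ) (hqj : 0 < q j) (hqk : 0 < q k) :
    |pd (pd (qLN δ M μ σ j) k) j q|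
      ≤ 3 * M * Real.exp (δ j + δ k)
        * ∫ α in Ioi (0:ℝ), α ^ 2 * Real.exp (-(α * (q j + q k))) * lognormalPdf μ σ α := by
  set s : ℝ := q j / 2 + q k with hs
  have hs0 : 0 < s := by rw [hs]; positivity
  have hqjk : 0 < q j + q k := by linarith
  have key := hasDerivAt_integral_of_dominated_loc_of_deriv_le (μ := volume.restrict (Ioi 0))
    (F := fun t α => α * Real.exp (δ j - α * t) * Real.exp (δ k - α * q k)
      / (1 + ∑ l, Real.exp (δ l - α * Function.update q j t l)) ^ 2 * lognormalPdf μ σ α)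
    (F' := fun t α => α ^ 2 * Real.exp (δ k - α * q k) * Real.exp (δ j - α * t)
      * (2 * Real.exp (δ j - α * t)
          - (1 + ∑ l, Real.exp (δ l - α * Function.update q j t l)))
      / (1 + ∑ l, Real.exp (δ l - α * Function.update q j t l)) ^ 3 * lognormalPdf μ σ α)
    (bound := fun α => 3 * Real.exp (δ j + δ k) * (α ^ 2 * Real.exp (-(α * s)))
      * lognormalPdf μ σ α)
    (x₀ := q j) (Metric.ball_mem_nhds (q j) (half_pos hqj)) ?_ ?_ ?_ ?_ ?_ ?_
  · -- conclusion
    have hev : (fun t => pd (qLN δ M μ σ j) k (Function.update q j t))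
        =ᶠ[nhds (q j)] fun t => M * ∫ α in Ioi (0:ℝ),
            α * Real.exp (δ j - α * t) * Real.exp (δ k - α * q k)
              / (1 + ∑ l, Real.exp (δ l - α * Function.update q j t l)) ^ 2
              * lognormalPdf μ σ α := by
      filter_upwards [Ioi_mem_nhds (show -q k < q j by linarith)] with t ht
      have hpos : 0 < (Function.update q j t) j + (Function.update q j t) k := by
        rw [Function.update_self, Function.update_of_ne hkj]
        have := mem_Ioi.1 ht
        linarith
      have h1 := pd_k_eq (μ := μ) hσ M δ j k hkj (Function.update q j t) hpos
      rw [h1]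
      congr 1
      simp only [Function.update_self, Function.update_of_ne hkj]
    have h0 : pd (pd (qLN δ M μ σ j) k) j q
        = deriv (fun t => pd (qLN δ M μ σ j) k (Function.update q j t)) (q j) := rfl
    rw [h0, hev.deriv_eq, (key.2.const_mul M).deriv, abs_mul, abs_of_pos hM]
    have hle : |∫ α in Ioi (0:ℝ), α ^ 2 * Real.exp (δ k - α * q k)
          * Real.exp (δ j - α * q j)
          * (2 * Real.exp (δ j - α * q j)
              - (1 + ∑ l, Real.exp (δ l - α * Function.update q j (q j) l)))
          / (1 + ∑ l, Real.exp (δ l - α * Function.update q j (q j) l)) ^ 3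
          * lognormalPdf μ σ α|
        ≤ ∫ α in Ioi (0:ℝ), 3 * Real.exp (δ j + δ k)
            * (α ^ 2 * Real.exp (-(α * (q j + q k)))) * lognormalPdf μ σ α := by
      rw [← Real.norm_eq_abs]
      apply norm_integral_le_of_norm_le (int_sq hσ hqjk _)
      filter_upwards [ae_restrict_mem measurableSet_Ioi] with α hα
      have hα0 : (0:ℝ) < α := hα
      have := Gbd (μ := μ) hσ δ j k q hα0 (q j)
      exact this
    calc M * |∫ α in Ioi (0:ℝ), _| ≤ M * ∫ α in Ioi (0:ℝ), 3 * Real.exp (δ j + δ k)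
          * (α ^ 2 * Real.exp (-(α * (q j + q k)))) * lognormalPdf μ σ α :=
        mul_le_mul_of_nonneg_left hle hM.le
      _ = 3 * M * Real.exp (δ j + δ k)
          * ∫ α in Ioi (0:ℝ), α ^ 2 * Real.exp (-(α * (q j + q k)))
            * lognormalPdf μ σ α := by
        simp only [mul_assoc]
        rw [MeasureTheory.integral_const_mul, MeasureTheory.integral_const_mul]
        ring
  · -- hF_meas
    apply Filter.Eventually.of_forall
    intro t
    apply ContinuousOn.aestronglyMeasurable _ measurableSet_Ioi
    apply ContinuousOn.mul _ (pdf_continuousOn hσ)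
    apply Continuous.continuousOn
    exact Continuous.div (by fun_prop) ((denom_cont δ _).pow 2)
      (fun α => pow_ne_zero 2 (denom_pos δ _ α).ne')
  · -- hF_int
    apply Integrable.mono' (int_lin hσ hqjk (Real.exp (δ j + δ k)))
    · apply ContinuousOn.aestronglyMeasurable _ measurableSet_Ioi
      apply ContinuousOn.mul _ (pdf_continuousOn hσ)
      apply Continuous.continuousOn
      exact Continuous.div (by fun_prop) ((denom_cont δ _).pow 2)
        (fun α => pow_ne_zero 2 (denom_pos δ _ α).ne')
    · filter_upwards [ae_restrict_mem measurableSet_Ioi] with α hα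
      have hα0 : (0:ℝ) < α := hα
      set D : ℝ := 1 + ∑ l, Real.exp (δ l - α * Function.update q j (q j) l) with hDdef
      have hD1 : 1 ≤ D := denom_ge_one δ _ α
      have hA0 : (0:ℝ) ≤ α * Real.exp (δ j - α * q j) * Real.exp (δ k - α * q k) := by
        positivity
      rw [Real.norm_eq_abs, abs_mul, abs_of_nonneg (pdf_nonneg hσ hα0), abs_div,
        abs_of_nonneg hA0, abs_of_nonneg (by positivity : (0:ℝ) ≤ D ^ 2)]
      apply mul_le_mul_of_nonneg_right _ (pdf_nonneg hσ hα0)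
      calc α * Real.exp (δ j - α * q j) * Real.exp (δ k - α * q k) / D ^ 2
          ≤ α * Real.exp (δ j - α * q j) * Real.exp (δ k - α * q k) :=
            div_le_self hA0 (one_le_pow₀ hD1)
        _ = Real.exp (δ j + δ k) * (α * Real.exp (-(α * (q j + q k)))) := by
            rw [mul_assoc, ← Real.exp_add,
              show δ j - α * q j + (δ k - α * q k) = δ j + δ k + -(α * (q j + q k)) by ring,
              Real.exp_add]
            ring
  · -- hF'_meas
    apply ContinuousOn.aestronglyMeasurable _ measurableSet_Ioi
    apply ContinuousOn.mul _ (pdf_continuousOn hσ)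
    apply Continuous.continuousOn
    exact Continuous.div (by fun_prop) ((denom_cont δ _).pow 3)
      (fun α => pow_ne_zero 3 (denom_pos δ _ α).ne')
  · -- h_bound
    filter_upwards [ae_restrict_mem measurableSet_Ioi] with α hα
    intro t ht
    have hα0 : (0:ℝ) < α := hα
    have ht' : q j / 2 < t := by
      have := Metric.mem_ball.1 ht
      rw [Real.dist_eq] at this
      cases abs_lt.1 this with
      | intro h1 h2 => linarith
    refine le_trans (Gbd (μ := μ) hσ δ j k q hα0 t) ?_
    apply mul_le_mul_of_nonneg_right _ (pdf_nonneg hσ hα0)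
    apply mul_le_mul_of_nonneg_left _ (by positivity)
    apply mul_le_mul_of_nonneg_left _ (by positivity)
    apply Real.exp_le_exp.2
    rw [hs]
    nlinarith
  · exact int_sq hσ hs0 (3 * Real.exp (δ j + δ k))
  · -- h_diff
    filter_upwards [ae_restrict_mem measurableSet_Ioi] with α hα
    intro t ht
    have hDd := (denom_hasDeriv δ q α j t).const_add 1
    have hDsq := hDd.pow 2
    have h0 : HasDerivAt (fun t : ℝ => δ j - α * t) (-α) t := by
      have h1 : HasDerivAt (fun t : ℝ => α * t) (α * 1) t := (hasDerivAt_id t).const_mul α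
      simpa using h1.const_sub (δ j)
    have hN := h0.exp
    have hdiv := hN.div hDsq (pow_ne_zero 2 (denom_pos δ (Function.update q j t) α).ne')
    have hfull := hdiv.const_mul
      (α * Real.exp (δ k - α * q k) * lognormalPdf μ σ α)
    have hfun : (fun t => α * Real.exp (δ j - α * t) * Real.exp (δ k - α * q k)
        / (1 + ∑ l, Real.exp (δ l - α * Function.update q j t l)) ^ 2 * lognormalPdf μ σ α)
        = fun t => (α * Real.exp (δ k - α * q k) * lognormalPdf μ σ α)
          * (Real.exp (δ j - α * t)
            / (1 + ∑ l, Real.exp (δ l - α * Function.update q j t l)) ^ 2) := by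
      funext u
      ring
    rw [hfun]
    refine hfull.congr_deriv ?_
    have hD0 : (0:ℝ) < 1 + ∑ l, Real.exp (δ l - α * Function.update q j t l) :=
      denom_pos δ _ α
    simp only [Pi.pow_apply]
    field_simp
    ring

end QLN4


/-- For `k ≠ j` there is `C > 0` (depending on `δ, M`) such that along any ray
`p ∈ ℝ_{++}^J`, `|∂²_{p_j p_k} q_j(λp)| ≤ C L''(c_{jk} λ p_j)` for all `λ > 0`,
where `c_{jk} = (p_j + p_k)/p_j > 1`. -/
theorem qLN_mixed_second_deriv_bound {J : ℕ} (hJ : 1 ≤ J) (M : ℝ) (hM : 0 < M)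
    (δ : Fin J → ℝ) (μ σ : ℝ) (hσ : 0 < σ) (j k : Fin J) (hkj : k ≠ j) :
    ∃ C > (0 : ℝ), ∀ p : Fin J → ℝ, (∀ i, 0 < p i) →
      (1 < (p j + p k) / p j) ∧
      ∀ l > (0 : ℝ),
        |pd (pd (qLN δ M μ σ j) k) j (l • p)|
          ≤ C * deriv (deriv (lnLaplace μ σ)) ((p j + p k) / p j * (l * p j)) := by
  refine ⟨3 * M * Real.exp (δ j + δ k), by positivity, ?_⟩
  intro p hp
  have hpj : 0 < p j := hp j
  have hpk : 0 < p k := hp k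
  refine ⟨(one_lt_div hpj).2 (by linarith), ?_⟩
  intro l hl
  have harg : (p j + p k) / p j * (l * p j) = l * (p j + p k) := by
    field_simp
  have hx : (0:ℝ) < l * (p j + p k) := by positivity
  rw [harg, QLN3.deriv2_lnLaplace hσ hx]
  have hqj : 0 < (l • p) j := by
    simp only [Pi.smul_apply, smul_eq_mul]
    positivity
  have hqk : 0 < (l • p) k := by
    simp only [Pi.smul_apply, smul_eq_mul]
    positivity
  have hb := QLN4.pd_pd_bound (μ := μ) hσ M hM δ j k hkj (l • p) hqj hqk
  have hint : (∫ α in Set.Ioi (0:ℝ),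
        α ^ 2 * Real.exp (-α * (l * (p j + p k))) * lognormalPdf μ σ α)
      = ∫ α in Set.Ioi (0:ℝ),
        α ^ 2 * Real.exp (-(α * ((l • p) j + (l • p) k))) * lognormalPdf μ σ α := by
    congr 1
    funext α
    congr 2
    simp only [Pi.smul_apply, smul_eq_mul]
    ring
  rw [hint]
  exact hb
end
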